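/- For positive integers n ≥ j, the spider tree S(⌊(n−1)/(j+1)⌋, ⌊n/(j+1)⌋, ..., ⌊(n+j−1)/(j+1)⌋) with j+1 legs has j-radius at least ⌊n/(j+1)⌋; consequently r_j(n) := max over trees T on n vertices of r_j(T) satisfies r_j(n) ≥ ⌊n/(j+1)⌋. -/

import Mathlib

/-- The spider graph `S(a₁,…,a_h)`: `h` paths of lengths `a i` with their first
vertices identified to a single center vertex (represented by `none`). The vertex
`some ⟨i, k⟩` is the `(k+1)`-st vertex (after the center) on the `i`-th leg. -/
def spider (h : ℕ) (a : Fin h → ℕ) : SimpleGraph (Option (Σ i : Fin h, Fin (a i))) :=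
  SimpleGraph.fromRel (fun x y =>
    (∃ (i : Fin h) (kk : Fin (a i)), x = none ∧ y = some ⟨i, kk⟩ ∧ (kk : ℕ) = 0) ∨
    (∃ (i : Fin h) (kk ll : Fin (a i)),
      x = some ⟨i, kk⟩ ∧ y = some ⟨i, ll⟩ ∧ (kk : ℕ) + 1 = (ll : ℕ)))

namespace SpiderAux

open SimpleGraph Finset

variable {h : ℕ} {a : Fin h → ℕ}

/-- depth of a vertex -/
def depth : Option (Σ i : Fin h, Fin (a i)) → ℕ
  | none => 0
  | some ⟨_, k⟩ => (k : ℕ) + 1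

/-- parent of a vertex -/
def par : Option (Σ i : Fin h, Fin (a i)) → Option (Σ i : Fin h, Fin (a i))
  | none => none
  | some ⟨i, k⟩ =>
      if hk : (k : ℕ) = 0 then none
      else some ⟨i, ⟨(k : ℕ) - 1, lt_of_le_of_lt (Nat.pred_le _) k.isLt⟩⟩

lemma rel_par {x y : Option (Σ i : Fin h, Fin (a i))}
    (hr : (∃ (i : Fin h) (kk : Fin (a i)), x = none ∧ y = some ⟨i, kk⟩ ∧ (kk : ℕ) = 0) ∨
      (∃ (i : Fin h) (kk ll : Fin (a i)),
        x = some ⟨i, kk⟩ ∧ y = some ⟨i, ll⟩ ∧ (kk : ℕ) + 1 = (ll : ℕ))) :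
    x = par y ∧ depth y = depth x + 1 := by
  rcases hr with ⟨i, kk, rfl, rfl, hkk⟩ | ⟨i, kk, ll, rfl, rfl, hkl⟩
  · constructor
    · simp [par, hkk]
    · simp [depth, hkk]
  · constructor
    · have hll : (ll : ℕ) ≠ 0 := by omega
      have hfin : (⟨(ll : ℕ) - 1, lt_of_le_of_lt (Nat.pred_le _) ll.isLt⟩ : Fin (a i)) = kk := by
        rw [Fin.ext_iff]
        show (ll : ℕ) - 1 = (kk : ℕ)
        omega
      simp only [par, dif_neg hll, hfin]
    · simp [depth]; omega

lemma adj_cases {x y : Option (Σ i : Fin h, Fin (a i))} (hxy : (spider h a).Adj x y) :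
    (x = par y ∧ depth y = depth x + 1) ∨ (y = par x ∧ depth x = depth y + 1) := by
  rw [spider, SimpleGraph.fromRel_adj] at hxy
  rcases hxy with ⟨-, hr | hr⟩
  · exact Or.inl (rel_par hr)
  · exact Or.inr (rel_par hr)

/-- A graph whose adjacency relation is given by a parent function with strictly
increasing depth is acyclic. -/
lemma no_cycle_at_max {W : Type*} {G : SimpleGraph W} (p : W → W) (d : W → ℕ)
    (hpd : ∀ x y, G.Adj x y → (x = p y ∧ d y = d x + 1) ∨ (y = p x ∧ d x = d y + 1))
    {u : W} (c : G.Walk u u) (hc : c.IsCycle)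
    (hmax : ∀ w ∈ c.support, d w ≤ d u) : False := by
  cases c with
  | nil => exact SimpleGraph.Walk.IsCycle.not_of_nil hc
  | @cons _ x _ hadj q =>
    rw [SimpleGraph.Walk.cons_isCycle_iff] at hc
    obtain ⟨hq, hedge⟩ := hc
    obtain ⟨y, huy, q2, hq2⟩ := SimpleGraph.Walk.exists_eq_cons_of_ne hadj.ne q.reverse
    have hy_mem : y ∈ q.support := by
      have : y ∈ q.reverse.support := by
        rw [hq2]
        simp [SimpleGraph.Walk.support_cons, SimpleGraph.Walk.start_mem_support]
      rwa [SimpleGraph.Walk.support_reverse, List.mem_reverse] at this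
    have hedge_y : s(u, y) ∈ q.edges := by
      have : s(u, y) ∈ q.reverse.edges := by
        rw [hq2]; simp
      rwa [SimpleGraph.Walk.edges_reverse, List.mem_reverse] at this
    have hxy : x ≠ y := by
      rintro rfl
      exact hedge hedge_y
    have hx_le : d x ≤ d u :=
      hmax x (by simp [SimpleGraph.Walk.support_cons, SimpleGraph.Walk.start_mem_support])
    have hy_le : d y ≤ d u := hmax y (by simp [SimpleGraph.Walk.support_cons, hy_mem])
    have hx : x = p u := by
      rcases hpd u x hadj with ⟨-, h1⟩ | ⟨h2, -⟩
      · omega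
      · exact h2
    have hy : y = p u := by
      rcases hpd u y huy with ⟨-, h1⟩ | ⟨h2, -⟩
      · omega
      · exact h2
    exact hxy (hx.trans hy.symm)

lemma isAcyclic_of_parent {W : Type*} {G : SimpleGraph W} (p : W → W) (d : W → ℕ)
    (hpd : ∀ x y, G.Adj x y → (x = p y ∧ d y = d x + 1) ∨ (y = p x ∧ d x = d y + 1)) :
    G.IsAcyclic := by
  classical
  intro v c hc
  obtain ⟨u, hu, hmaxu⟩ := c.support.toFinset.exists_max_image d
    ⟨v, List.mem_toFinset.mpr c.start_mem_support⟩
  have hu' : u ∈ c.support := List.mem_toFinset.mp hu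
  refine no_cycle_at_max p d hpd (c.rotate u hu') (hc.rotate hu') ?_
  intro w hw
  have hsub : w ∈ c.support := by
    rw [(c.rotate u hu').support_eq_cons, List.mem_cons] at hw
    rcases hw with rfl | hw'
    · exact hu'
    · exact List.mem_of_mem_tail (((c.support_rotate u hu').mem_iff).mp hw')
  exact hmaxu w (List.mem_toFinset.mpr hsub)

lemma spider_acyclic : (spider h a).IsAcyclic :=
  isAcyclic_of_parent par depth (fun _ _ hxy => adj_cases hxy)

lemma reachable_none (i : Fin h) : ∀ (k : ℕ) (hk : k < a i),
    (spider h a).Reachable (some ⟨i, ⟨k, hk⟩⟩) none := by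
  intro k
  induction k with
  | zero =>
    intro hk
    refine SimpleGraph.Adj.reachable ?_
    rw [spider, SimpleGraph.fromRel_adj]
    exact ⟨by simp, Or.inr (Or.inl ⟨i, ⟨0, hk⟩, rfl, rfl, rfl⟩)⟩
  | succ kk ih =>
    intro hk
    have hkk : kk < a i := Nat.lt_of_succ_lt hk
    have hadj : (spider h a).Adj (some ⟨i, ⟨kk + 1, hk⟩⟩) (some ⟨i, ⟨kk, hkk⟩⟩) := by
      rw [spider, SimpleGraph.fromRel_adj]
      refine ⟨?_, Or.inr (Or.inr ⟨i, ⟨kk, hkk⟩, ⟨kk + 1, hk⟩, rfl, rfl, rfl⟩)⟩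
      simp [Fin.ext_iff]
    exact hadj.reachable.trans (ih hkk)

lemma all_reachable_none (x : Option (Σ i : Fin h, Fin (a i))) :
    (spider h a).Reachable x none := by
  match x with
  | none => exact SimpleGraph.Reachable.refl none
  | some ⟨i, k⟩ => exact reachable_none i k.1 k.2

lemma spider_connected : (spider h a).Connected := by
  rw [SimpleGraph.connected_iff]
  refine ⟨fun x y => (all_reachable_none x).trans (all_reachable_none y).symm, ⟨none⟩⟩

lemma spider_isTree : (spider h a).IsTree :=
  ⟨spider_connected, spider_acyclic⟩

/-- the floor-sum identity -/
lemma sum_div_eq (H : ℕ) (hH : 0 < H) : ∀ m : ℕ, ∑ i ∈ Finset.range H, (m + i) / H = m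
  | 0 => Finset.sum_eq_zero fun i hi => Nat.div_eq_of_lt (by simpa using Finset.mem_range.mp hi)
  | (m + 1) => by
    have h1 : ∑ i ∈ Finset.range (H + 1), (m + i) / H
        = (∑ i ∈ Finset.range H, (m + i) / H) + (m + H) / H := Finset.sum_range_succ _ _
    have h2 : ∑ i ∈ Finset.range (H + 1), (m + i) / H
        = (∑ i ∈ Finset.range H, (m + (i + 1)) / H) + (m + 0) / H := Finset.sum_range_succ' _ _
    have h3 : (m + H) / H = m / H + 1 := Nat.add_div_right m hH
    have IH := sum_div_eq H hH m
    have h4 : ∑ i ∈ Finset.range H, (m + 1 + i) / H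
        = ∑ i ∈ Finset.range H, (m + (i + 1)) / H :=
      Finset.sum_congr rfl fun i _ => by rw [Nat.add_assoc, Nat.add_comm 1 i]
    rw [h3, IH] at h1
    simp only [Nat.add_zero] at h2
    rw [h4]
    generalize m / H = q at h1 h2
    omega

/-- distance lower bound via a 1-Lipschitz function -/
lemma walk_lower {W : Type*} {G : SimpleGraph W} (f : W → ℕ)
    (hf : ∀ x y, G.Adj x y → f x ≤ f y + 1) :
    ∀ {w u : W} (p : G.Walk w u), f w ≤ f u + p.length := by
  intro w u p
  induction p with
  | nil => simp
  | cons hadj q ih =>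
    have := hf _ _ hadj
    rw [SimpleGraph.Walk.length_cons]
    omega

lemma dist_lower {W : Type*} {G : SimpleGraph W} (f : W → ℕ)
    (hf : ∀ x y, G.Adj x y → f x ≤ f y + 1)
    {w u : W} (hr : G.Reachable w u) : f w ≤ f u + G.dist w u := by
  obtain ⟨p, hp⟩ := hr.exists_walk_length_eq_dist
  rw [← hp]
  exact walk_lower f hf p

/-- "distance to the tip of leg `i`" potential function -/
def fdist (i : Fin h) : Option (Σ i' : Fin h, Fin (a i')) → ℕ
  | none => a i
  | some ⟨i', k⟩ => if i' = i then a i - ((k : ℕ) + 1) else a i + (k : ℕ) + 1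

lemma fdist_lip (i : Fin h) : ∀ x y, (spider h a).Adj x y → fdist i x ≤ fdist i y + 1 := by
  intro x y hxy
  rw [spider, SimpleGraph.fromRel_adj] at hxy
  obtain ⟨-, hr⟩ := hxy
  rcases hr with (⟨i', kk, rfl, rfl, hkk⟩ | ⟨i', kk, ll, rfl, rfl, hkl⟩) |
      (⟨i', kk, rfl, rfl, hkk⟩ | ⟨i', kk, ll, rfl, rfl, hkl⟩)
  · have h1 := kk.isLt
    rcases eq_or_ne i' i with rfl | hi
    · simp only [fdist, if_true, eq_self_iff_true]; omega
    · simp only [fdist, if_neg hi]; omega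
  · have h1 := kk.isLt
    have h2 := ll.isLt
    rcases eq_or_ne i' i with rfl | hi
    · simp only [fdist, if_true, eq_self_iff_true]; omega
    · simp only [fdist, if_neg hi]; omega
  · have h1 := kk.isLt
    rcases eq_or_ne i' i with rfl | hi
    · simp only [fdist, if_true, eq_self_iff_true]; omega
    · simp only [fdist, if_neg hi]; omega
  · have h1 := kk.isLt
    have h2 := ll.isLt
    rcases eq_or_ne i' i with rfl | hi
    · simp only [fdist, if_true, eq_self_iff_true]; omega
    · simp only [fdist, if_neg hi]; omega

lemma depth_lip : ∀ x y : Option (Σ i : Fin h, Fin (a i)),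
    (spider h a).Adj x y → depth x ≤ depth y + 1 := by
  intro x y hxy
  rcases adj_cases hxy with ⟨-, hd⟩ | ⟨-, hd⟩ <;> omega

lemma center_bound (w : Option (Σ i : Fin h, Fin (a i))) :
    depth w ≤ (spider h a).dist w none := by
  have hd := dist_lower depth depth_lip (all_reachable_none w)
  have h0 : depth (none : Option (Σ i : Fin h, Fin (a i))) = 0 := rfl
  omega

lemma tip_bound (i : Fin h) (hpos : 0 < a i) (w : Option (Σ i' : Fin h, Fin (a i')))
    (hw : ∀ (k : Fin (a i)), w ≠ some ⟨i, k⟩) :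
    a i + depth w ≤ (spider h a).dist w (some ⟨i, ⟨a i - 1, Nat.sub_lt hpos one_pos⟩⟩) := by
  have hd := dist_lower (fdist i) (fdist_lip i) (w := w)
    (u := some ⟨i, ⟨a i - 1, Nat.sub_lt hpos one_pos⟩⟩)
    ((all_reachable_none w).trans
      (all_reachable_none (some ⟨i, ⟨a i - 1, Nat.sub_lt hpos one_pos⟩⟩)).symm)
  have hfu : fdist i (some ⟨i, ⟨a i - 1, Nat.sub_lt hpos one_pos⟩⟩) = 0 := by
    simp only [fdist, eq_self_iff_true, if_true]
    omega
  have hfw : a i + depth w = fdist i w := by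
    match w with
    | none => simp [fdist, depth]
    | some ⟨i', k⟩ =>
      have hne : i' ≠ i := by
        intro hc
        subst hc
        exact hw k rfl
      simp only [fdist, depth, if_neg hne]
      omega
  omega

end SpiderAux

theorem stmt8 (n j : ℕ) (hj : 0 < j) (hjn : j ≤ n) :
    -- the spider S(⌊(n-1)/(j+1)⌋, …, ⌊(n+j-1)/(j+1)⌋) with j+1 legs ...
    (spider (j + 1) (fun i => (n - 1 + (i : ℕ)) / (j + 1))).IsTree ∧
    -- ... is a tree on n vertices ...
    Fintype.card (Option (Σ i : Fin (j + 1), Fin ((n - 1 + (i : ℕ)) / (j + 1)))) = n ∧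
    -- ... with j-radius at least ⌊n/(j+1)⌋; hence r_j(n) ≥ ⌊n/(j+1)⌋
    (∀ W : Finset (Option (Σ i : Fin (j + 1), Fin ((n - 1 + (i : ℕ)) / (j + 1)))),
      W.card ≤ j → ∃ u, ∀ w ∈ W,
        n / (j + 1) ≤ (spider (j + 1) (fun i => (n - 1 + (i : ℕ)) / (j + 1))).dist w u) := by
  have h1n : 1 ≤ n := le_trans hj hjn
  refine ⟨SpiderAux.spider_isTree, ?_, ?_⟩
  · have hsum : ∑ i : Fin (j + 1), (n - 1 + (i : ℕ)) / (j + 1) = n - 1 := by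
      rw [Fin.sum_univ_eq_sum_range (fun i => (n - 1 + i) / (j + 1)) (j + 1)]
      exact SpiderAux.sum_div_eq (j + 1) (Nat.succ_pos j) (n - 1)
    simp only [Fintype.card_option, Fintype.card_sigma, Fintype.card_fin]
    rw [hsum]
    omega
  · intro W hW
    by_cases hm : n / (j + 1) = 0
    · exact ⟨none, fun w _ => by rw [hm]; exact Nat.zero_le _⟩
    · have hm1 : 1 ≤ n / (j + 1) := Nat.pos_of_ne_zero hm
      have hn1 : j + 1 ≤ n := by
        by_contra hc
        push_neg at hc
        exact hm (Nat.div_eq_of_lt hc)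
      have hma : ∀ i : Fin (j + 1), i ≠ 0 → n / (j + 1) ≤ (n - 1 + (i : ℕ)) / (j + 1) := by
        intro i hi
        apply Nat.div_le_div_right
        have hiv : (i : ℕ) ≠ 0 := Fin.val_ne_zero_iff.mpr hi
        omega
      have hma0 : n / (j + 1) ≤ (n - 1 + ((0 : Fin (j + 1)) : ℕ)) / (j + 1) + 1 := by
        rw [Fin.val_zero]
        have h1 : n / (j + 1) ≤ (n - 1 + (j + 1)) / (j + 1) :=
          Nat.div_le_div_right (by omega)
        rw [Nat.add_div_right _ (Nat.succ_pos j)] at h1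
        simpa using h1
      by_cases hfree : ∃ i : Fin (j + 1), i ≠ 0 ∧
          (some i) ∉ W.image (Option.map (Sigma.fst))
      · obtain ⟨i, hi0, hicov⟩ := hfree
        have hai : n / (j + 1) ≤ (n - 1 + (i : ℕ)) / (j + 1) := hma i hi0
        have hpos : 0 < (n - 1 + (i : ℕ)) / (j + 1) := lt_of_lt_of_le hm1 hai
        refine ⟨some ⟨i, ⟨(n - 1 + (i : ℕ)) / (j + 1) - 1, Nat.sub_lt hpos one_pos⟩⟩, ?_⟩
        intro w hw
        have hwne : ∀ k : Fin ((n - 1 + (i : ℕ)) / (j + 1)), w ≠ some ⟨i, k⟩ := by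
          intro k hk
          exact hicov (Finset.mem_image.mpr ⟨w, hw, by rw [hk]; rfl⟩)
        have hb := SpiderAux.tip_bound (a := fun i => (n - 1 + (i : ℕ)) / (j + 1))
          i hpos w hwne
        exact hai.trans ((Nat.le_add_right _ _).trans hb)
      · push_neg at hfree
        have hTsub : (Finset.univ.erase (0 : Fin (j + 1))).image
            (fun i => (some i : Option (Fin (j + 1)))) ⊆ W.image (Option.map Sigma.fst) := by
          intro x hx
          obtain ⟨i, hi, rfl⟩ := Finset.mem_image.mp hx
          exact hfree i (Finset.ne_of_mem_erase hi)
        have hTcard : ((Finset.univ.erase (0 : Fin (j + 1))).image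
            (fun i => (some i : Option (Fin (j + 1))))).card = j := by
          rw [Finset.card_image_of_injective _ (Option.some_injective _),
            Finset.card_erase_of_mem (Finset.mem_univ _), Finset.card_univ, Fintype.card_fin]
          omega
        have hcovc : (W.image (Option.map Sigma.fst)).card ≤ j :=
          le_trans Finset.card_image_le hW
        have hcoveq := Finset.eq_of_subset_of_card_le hTsub
          (le_of_le_of_eq hcovc hTcard.symm)
        have hshape : ∀ w ∈ W, ∃ (i' : Fin (j + 1)) (k : Fin ((n - 1 + (i' : ℕ)) / (j + 1))),
            i' ≠ 0 ∧ w = some ⟨i', k⟩ := by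
          intro w hw
          have hmem : Option.map Sigma.fst w ∈ W.image (Option.map Sigma.fst) :=
            Finset.mem_image_of_mem _ hw
          rw [← hcoveq] at hmem
          obtain ⟨i', hi', heq⟩ := Finset.mem_image.mp hmem
          have hi'0 : i' ≠ 0 := Finset.ne_of_mem_erase hi'
          rcases w with _ | ⟨i2, k⟩
          · simp at heq
          · have : i2 = i' := by simpa using heq.symm
            subst this
            exact ⟨i2, k, hi'0, rfl⟩
        by_cases ha0 : 0 < (n - 1 + ((0 : Fin (j + 1)) : ℕ)) / (j + 1)
        · refine ⟨some ⟨0, ⟨(n - 1 + ((0 : Fin (j + 1)) : ℕ)) / (j + 1) - 1,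
            Nat.sub_lt ha0 one_pos⟩⟩, ?_⟩
          intro w hw
          obtain ⟨i', k, hi'0, rfl⟩ := hshape w hw
          have hwne : ∀ kk : Fin ((n - 1 + ((0 : Fin (j + 1)) : ℕ)) / (j + 1)),
              (some ⟨i', k⟩ : Option (Σ i : Fin (j + 1), Fin ((n - 1 + (i : ℕ)) / (j + 1))))
                ≠ some ⟨0, kk⟩ := by
            intro kk hk
            apply hi'0
            have := congrArg (Option.map Sigma.fst) hk
            simpa using this
          have hb := SpiderAux.tip_bound (a := fun i => (n - 1 + (i : ℕ)) / (j + 1))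
            0 ha0 (some ⟨i', k⟩) hwne
          have hd1 : 1 ≤ SpiderAux.depth
              (some ⟨i', k⟩ : Option (Σ i : Fin (j + 1), Fin ((n - 1 + (i : ℕ)) / (j + 1)))) := by
            simp [SpiderAux.depth]
          refine hma0.trans (le_trans ?_ hb)
          exact Nat.add_le_add_left hd1 _
        · push_neg at ha0
          have h00 : (n - 1 + ((0 : Fin (j + 1)) : ℕ)) / (j + 1) = 0 := Nat.le_zero.mp ha0
          have hm_eq : n / (j + 1) ≤ 1 := by rwa [h00, Nat.zero_add] at hma0
          refine ⟨none, ?_⟩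
          intro w hw
          obtain ⟨i', k, hi'0, rfl⟩ := hshape w hw
          have hcb := SpiderAux.center_bound (a := fun i => (n - 1 + (i : ℕ)) / (j + 1))
            (some ⟨i', k⟩)
          have hd1 : 1 ≤ SpiderAux.depth
              (some ⟨i', k⟩ : Option (Σ i : Fin (j + 1), Fin ((n - 1 + (i : ℕ)) / (j + 1)))) := by
            simp [SpiderAux.depth]
          exact hm_eq.trans (hd1.trans hcb)
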